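/- Let a₁,…,a_n be distinct reals (n ≥ 1), ε₁,…,ε_n ∈ {-1,1}, Δᵢ(a) = εᵢ(a-aᵢ), let I ⊆ ℝ be an open interval on which Δᵢ > 0 for all i, let ξᵢ ∈ ℝ, and let x(a) = ∑_{i=1}^n ξᵢ Δᵢ(a)^{-1/2}; assume x′(a) ≠ 0 on I. On the open set U = { (a, y, p_a, p_y) ∈ ℝ⁴ : a ∈ I } define Π = a p_a / x′(a), H = Π² + a p_y², G = ∑_{k=0}^{n} (-1)^k σ_k H^{n-k} p_y^{2k}, Q₁ = ∑_{k=1}^{n} b̃_k(a) H^{n-k} Π p_y^{2k-1} with b̃_k(a) = (-1)^k ∑_i (ξᵢ/Δᵢ(a)^{1/2}) σ^i_{k-1}, Q₂ = ∑_{k=1}^{n} c̃_k(a) H^{n-k} p_y^{2k} with c̃_k(a) = ((-1)^{k+1}/2)[ ∑_i (ξᵢ²/Δᵢ(a)) σ^i_{k-1} + ∑_{i≠j} (ξᵢξ_j/(Δᵢ(a)Δ_j(a))^{1/2})(σ^{ij}_{k-1} + a σ^{ij}_{k-2}) ], S₁ = Q₁ + y G, and S₂ = Q₂ + y Q₁ +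 (y²/2) G. Then {H, p_y} = 0, {H, S₁} = 0 and {H, S₂} = 0 everywhere on U. -/

import Mathlib

open Polynomial

/-- For a polynomial `Q` of degree `d` written as `Q(X) = ∑_{k=0}^{d} (-1)^k σ_k X^{d-k}`,
`sig d Q k` is the coefficient `σ_k`, extended by `0` outside `0 ≤ k ≤ d`. -/
noncomputable def sig (d : ℕ) (Q : Polynomial ℝ) (k : ℤ) : ℝ :=
  if 0 ≤ k ∧ k ≤ (d : ℤ) then (-1 : ℝ) ^ k * Q.coeff (d - k.toNat) else 0

/-- `σ_k` for `P(X) = ∏ᵢ (X-aᵢ) = ∑_{k=0}^{n} (-1)^k σ_k X^{n-k}`. -/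
noncomputable def sigma (n : ℕ) (a : Fin n → ℝ) (k : ℤ) : ℝ :=
  sig n (∏ i, (X - C (a i))) k

/-- `σ^i_k` defined by `P(X)/(X-aᵢ) = ∑_{k=0}^{n-1} (-1)^k σ^i_k X^{n-1-k}`,
with `σ^i_{-1} = σ^i_n = 0`. -/
noncomputable def sigmaI (n : ℕ) (a : Fin n → ℝ) (i : Fin n) (k : ℤ) : ℝ :=
  sig (n - 1) (∏ j ∈ Finset.univ.erase i, (X - C (a j))) k

/-- `σ^{ij}_k` (for `i ≠ j`) defined by
`P(X)/((X-aᵢ)(X-a_j)) = ∑_{k=0}^{n-2} (-1)^k σ^{ij}_k X^{n-2-k}`,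
with `σ^{ij}_{-2} = σ^{ij}_{-1} = σ^{ij}_{n-1} = σ^{ij}_n = 0`. -/
noncomputable def sigmaIJ (n : ℕ) (a : Fin n → ℝ) (i j : Fin n) (k : ℤ) : ℝ :=
  sig (n - 2) (∏ l ∈ (Finset.univ.erase i).erase j, (X - C (a l))) k

/-- The canonical Poisson bracket of two functions of `(a, y, p_a, p_y) ∈ ℝ⁴`:
`{f,g} = f_a g_{p_a} + f_y g_{p_y} − f_{p_a} g_a − f_{p_y} g_y`. -/
noncomputable def pb (f g : ℝ → ℝ → ℝ → ℝ → ℝ) (A y pa py : ℝ) : ℝ :=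
  deriv (fun t => f t y pa py) A * deriv (fun t => g A y t py) pa +
    deriv (fun t => f A t pa py) y * deriv (fun t => g A y pa t) py -
    deriv (fun t => f A y t py) pa * deriv (fun t => g t y pa py) A -
    deriv (fun t => f A y pa t) py * deriv (fun t => g A t pa py) y

/-- `x(a) = ∑ᵢ ξᵢ (εᵢ(a-aᵢ))^{-1/2}`. -/
noncomputable def xfun (n : ℕ) (a ε ξ : Fin n → ℝ) (t : ℝ) : ℝ :=
  ∑ i, ξ i * (ε i * (t - a i)) ^ (-(1/2) : ℝ)

/-- `Π = a p_a / x′(a)`. -/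
noncomputable def PiF (n : ℕ) (a ε ξ : Fin n → ℝ) : ℝ → ℝ → ℝ → ℝ → ℝ :=
  fun A _y pa _py => A * pa / deriv (xfun n a ε ξ) A

/-- The hamiltonian `H = Π² + a p_y²`. -/
noncomputable def HF (n : ℕ) (a ε ξ : Fin n → ℝ) : ℝ → ℝ → ℝ → ℝ → ℝ :=
  fun A y pa py => (PiF n a ε ξ A y pa py) ^ 2 + A * py ^ 2

/-- `G = ∑_{k=0}^{n} (-1)^k σ_k H^{n-k} p_y^{2k}`. -/
noncomputable def GF (n : ℕ) (a ε ξ : Fin n → ℝ) : ℝ → ℝ → ℝ → ℝ → ℝ :=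
  fun A y pa py =>
    ∑ k ∈ Finset.range (n + 1),
      (-1 : ℝ) ^ k * sigma n a (k : ℤ) * (HF n a ε ξ A y pa py) ^ (n - k) * py ^ (2 * k)

/-- The coefficient `b̃_k(a) = (-1)^k ∑ᵢ (ξᵢ/Δᵢ(a)^{1/2}) σ^i_{k-1}`. -/
noncomputable def btilc (n : ℕ) (a ε ξ : Fin n → ℝ) (k : ℕ) (A : ℝ) : ℝ :=
  (-1 : ℝ) ^ k * ∑ i, ξ i / (ε i * (A - a i)) ^ ((1/2) : ℝ) * sigmaI n a i ((k : ℤ) - 1)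

/-- `Q₁ = ∑_{k=1}^{n} b̃_k H^{n-k} Π p_y^{2k-1}`. -/
noncomputable def Q1F (n : ℕ) (a ε ξ : Fin n → ℝ) : ℝ → ℝ → ℝ → ℝ → ℝ :=
  fun A y pa py =>
    ∑ k ∈ Finset.Icc 1 n,
      btilc n a ε ξ k A * (HF n a ε ξ A y pa py) ^ (n - k) * PiF n a ε ξ A y pa py *
        py ^ (2 * k - 1)

/-- The coefficient `c̃_k(a) = ((-1)^{k+1}/2)[ ∑ᵢ (ξᵢ²/Δᵢ) σ^i_{k-1}
+ ∑_{i≠j} (ξᵢξ_j/(ΔᵢΔ_j)^{1/2})(σ^{ij}_{k-1} + a σ^{ij}_{k-2}) ]`. -/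
noncomputable def ctilc (n : ℕ) (a ε ξ : Fin n → ℝ) (k : ℕ) (A : ℝ) : ℝ :=
  ((-1 : ℝ) ^ (k + 1) / 2) *
    ((∑ i, ξ i ^ 2 / (ε i * (A - a i)) * sigmaI n a i ((k : ℤ) - 1)) +
      ∑ i, ∑ j ∈ Finset.univ.erase i,
        ξ i * ξ j / ((ε i * (A - a i)) * (ε j * (A - a j))) ^ ((1/2) : ℝ) *
          (sigmaIJ n a i j ((k : ℤ) - 1) + A * sigmaIJ n a i j ((k : ℤ) - 2)))

/-- `Q₂ = ∑_{k=1}^{n} c̃_k H^{n-k} p_y^{2k}`. -/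
noncomputable def Q2F (n : ℕ) (a ε ξ : Fin n → ℝ) : ℝ → ℝ → ℝ → ℝ → ℝ :=
  fun A y pa py =>
    ∑ k ∈ Finset.Icc 1 n,
      ctilc n a ε ξ k A * (HF n a ε ξ A y pa py) ^ (n - k) * py ^ (2 * k)

/-- `S₁ = Q₁ + y G`. -/
noncomputable def S1F (n : ℕ) (a ε ξ : Fin n → ℝ) : ℝ → ℝ → ℝ → ℝ → ℝ :=
  fun A y pa py => Q1F n a ε ξ A y pa py + y * GF n a ε ξ A y pa py

/-- `S₂ = Q₂ + y Q₁ + (y²/2) G`. -/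
noncomputable def S2F (n : ℕ) (a ε ξ : Fin n → ℝ) : ℝ → ℝ → ℝ → ℝ → ℝ :=
  fun A y pa py =>
    Q2F n a ε ξ A y pa py + y * Q1F n a ε ξ A y pa py + y ^ 2 / 2 * GF n a ε ξ A y pa py

lemma sig_of_neg {d : ℕ} {Q : Polynomial ℝ} {k : ℤ} (hk : k < 0) : sig d Q k = 0 :=
  if_neg (by omega)

lemma sig_of_gt {d : ℕ} {Q : Polynomial ℝ} {k : ℤ} (hk : (d : ℤ) < k) : sig d Q k = 0 :=
  if_neg (by omega)

lemma sig_nat {d : ℕ} {Q : Polynomial ℝ} {j : ℕ} (hj : j ≤ d) :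
    sig d Q (j : ℤ) = (-1 : ℝ) ^ j * Q.coeff (d - j) := by
  rw [sig, if_pos ⟨by positivity, by exact_mod_cast hj⟩, Int.toNat_natCast, zpow_natCast]

lemma sig_step (e : ℕ) (b : ℝ) (R : Polynomial ℝ) (hR : R.natDegree ≤ e) (k : ℤ) :
    sig (e + 1) ((X - C b) * R) k = sig e R k + b * sig e R (k - 1) := by
  have hco : ∀ m : ℕ, ((X - C b) * R).coeff m
      = (if m = 0 then 0 else R.coeff (m - 1)) - b * R.coeff m := by
    intro m
    rw [sub_mul, coeff_sub, coeff_C_mul]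
    cases m with
    | zero => simp [mul_coeff_zero]
    | succ m => simp [coeff_X_mul]
  rcases lt_or_ge k 0 with hk | hk
  · rw [sig_of_neg hk, sig_of_neg hk, sig_of_neg (by omega), mul_zero, add_zero]
  rcases lt_or_ge ((e : ℤ) + 1) k with hk2 | hk2
  · rw [sig_of_gt (by exact_mod_cast hk2), sig_of_gt (by omega), sig_of_gt (by omega)]
    ring
  obtain ⟨j, rfl⟩ := Int.eq_ofNat_of_zero_le hk
  have hj : j ≤ e + 1 := by exact_mod_cast hk2
  rw [sig_nat hj, hco]
  cases j with
  | zero =>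
    simp only [Nat.sub_zero]
    rw [if_neg (by omega : ¬ e + 1 = 0)]
    have hz : R.coeff (e + 1 - 1) = R.coeff e := by congr 1
    have hz2 : R.coeff (e + 1) = 0 := coeff_eq_zero_of_natDegree_lt (by omega)
    rw [hz, hz2, sig_nat (Nat.zero_le e), Nat.sub_zero,
      show ((0:ℕ):ℤ) - 1 = (-1 : ℤ) by norm_num, sig_of_neg (by norm_num)]
    ring
  | succ i =>
    have hii : ((i + 1 : ℕ) : ℤ) - 1 = ((i : ℕ) : ℤ) := by push_cast; ring
    rw [hii, sig_nat (show i ≤ e by omega)]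
    rcases Nat.lt_or_ge (i + 1) (e + 1) with hc | hc
    · have h1 : ¬ e + 1 - (i + 1) = 0 := by omega
      rw [if_neg h1, sig_nat (show i + 1 ≤ e by omega)]
      have h2 : R.coeff (e + 1 - (i+1) - 1) = R.coeff (e - (i+1)) := by congr 1; omega
      have h3 : R.coeff (e + 1 - (i+1)) = R.coeff (e - i) := by congr 1; omega
      rw [h2, h3, pow_succ]
      ring
    · have hie : i = e := by omega
      subst hie
      rw [if_pos (by omega), sig_of_gt (by exact_mod_cast by omega : ((i:ℕ):ℤ) < ((i+1 : ℕ):ℤ))]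
      have h3 : R.coeff (i + 1 - (i+1)) = R.coeff (i - i) := by congr 1; omega
      rw [h3, pow_succ]
      ring

lemma natDegree_prod_lin {n : ℕ} (a : Fin n → ℝ) (s : Finset (Fin n)) :
    (∏ l ∈ s, (X - C (a l))).natDegree = s.card := by
  rw [natDegree_prod_of_monic _ _ (fun i _ => monic_X_sub_C (a i))]
  simp

lemma sigma_rec {n : ℕ} (hn : 1 ≤ n) (a : Fin n → ℝ) (i : Fin n) (k : ℤ) :
    sigma n a k = sigmaI n a i k + a i * sigmaI n a i (k - 1) := by
  rw [sigma, sigmaI, ← Finset.mul_prod_erase _ _ (Finset.mem_univ i)]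
  have h1 : n = (n - 1) + 1 := by omega
  have h2 : (∏ j ∈ Finset.univ.erase i, (X - C (a j))).natDegree ≤ n - 1 := by
    rw [natDegree_prod_lin]
    rw [Finset.card_erase_of_mem (Finset.mem_univ i), Finset.card_univ, Fintype.card_fin]
  rw [show sig n = sig ((n-1)+1) by rw [← h1]]
  exact sig_step (n-1) (a i) _ h2 k

lemma sigmaI_rec {n : ℕ} (a : Fin n → ℝ) (i j : Fin n) (hij : j ≠ i) (k : ℤ) :
    sigmaI n a i k = sigmaIJ n a i j k + a j * sigmaIJ n a i j (k - 1) := by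
  have hn2 : 2 ≤ n := by
    have : Nontrivial (Fin n) := ⟨⟨i, j, fun h => hij h.symm⟩⟩
    have := Fintype.one_lt_card_iff_nontrivial.2 this
    simp at this; omega
  have hjmem : j ∈ Finset.univ.erase i := Finset.mem_erase.2 ⟨hij, Finset.mem_univ j⟩
  rw [sigmaI, sigmaIJ, ← Finset.mul_prod_erase _ _ hjmem]
  have h1 : n - 1 = (n - 2) + 1 := by omega
  have h2 : (∏ l ∈ (Finset.univ.erase i).erase j, (X - C (a l))).natDegree ≤ n - 2 := by
    rw [natDegree_prod_lin]
    rw [Finset.card_erase_of_mem hjmem, Finset.card_erase_of_mem (Finset.mem_univ i),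
      Finset.card_univ, Fintype.card_fin]
    omega
  rw [show sig (n-1) = sig ((n-2)+1) by rw [← h1]]
  exact sig_step (n-2) (a j) _ h2 k

lemma sigmaIJ_symm {n : ℕ} (a : Fin n → ℝ) (i j : Fin n) (k : ℤ) :
    sigmaIJ n a i j k = sigmaIJ n a j i k := by
  rw [sigmaIJ, sigmaIJ, Finset.erase_right_comm]

lemma sigmaI_neg {n : ℕ} (a : Fin n → ℝ) (i : Fin n) {k : ℤ} (hk : k < 0) :
    sigmaI n a i k = 0 := sig_of_neg hk

lemma sigmaI_gt {n : ℕ} (hn : 1 ≤ n) (a : Fin n → ℝ) (i : Fin n) {k : ℤ} (hk : (n : ℤ) ≤ k) :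
    sigmaI n a i k = 0 := sig_of_gt (by omega)

-- ## new definitions
noncomputable def vF (n : ℕ) (a ε : Fin n → ℝ) (i : Fin n) (t : ℝ) : ℝ :=
  (ε i * (t - a i)) ^ (-(1/2) : ℝ)

noncomputable def vdF (n : ℕ) (a ε : Fin n → ℝ) (i : Fin n) (t : ℝ) : ℝ :=
  -(vF n a ε i t) / (2 * (t - a i))

noncomputable def wvF (n : ℕ) (a ε ξ : Fin n → ℝ) (t : ℝ) : ℝ :=
  ∑ i, ξ i * vdF n a ε i t

noncomputable def btwF (n : ℕ) (a ε ξ : Fin n → ℝ) (k : ℕ) (t : ℝ) : ℝ :=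
  (-1 : ℝ) ^ k * ∑ i, ξ i * vF n a ε i t * sigmaI n a i ((k : ℤ) - 1)

noncomputable def bdF (n : ℕ) (a ε ξ : Fin n → ℝ) (k : ℕ) (t : ℝ) : ℝ :=
  (-1 : ℝ) ^ k * ∑ i, ξ i * vdF n a ε i t * sigmaI n a i ((k : ℤ) - 1)

noncomputable def ctwF (n : ℕ) (a ε ξ : Fin n → ℝ) (k : ℕ) (t : ℝ) : ℝ :=
  ((-1 : ℝ) ^ (k + 1) / 2) *
    ((∑ i, ξ i ^ 2 * (vF n a ε i t * vF n a ε i t) * sigmaI n a i ((k : ℤ) - 1)) +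
      ∑ i, ∑ j ∈ Finset.univ.erase i,
        ξ i * ξ j * vF n a ε i t * vF n a ε j t *
          (sigmaIJ n a i j ((k : ℤ) - 1) + t * sigmaIJ n a i j ((k : ℤ) - 2)))

noncomputable def cdF (n : ℕ) (a ε ξ : Fin n → ℝ) (k : ℕ) (t : ℝ) : ℝ :=
  ((-1 : ℝ) ^ (k + 1) / 2) *
    ((∑ i, ξ i ^ 2 * (vdF n a ε i t * vF n a ε i t + vF n a ε i t * vdF n a ε i t) *
        sigmaI n a i ((k : ℤ) - 1)) +
      ∑ i, ∑ j ∈ Finset.univ.erase i,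
        ξ i * ξ j * ((vdF n a ε i t * vF n a ε j t + vF n a ε i t * vdF n a ε j t) *
            (sigmaIJ n a i j ((k : ℤ) - 1) + t * sigmaIJ n a i j ((k : ℤ) - 2)) +
          vF n a ε i t * vF n a ε j t * sigmaIJ n a i j ((k : ℤ) - 2)))

section derivs
variable {n : ℕ} {a ε ξ : Fin n → ℝ} {t : ℝ}

lemma sub_ne (i : Fin n) (ht : 0 < ε i * (t - a i)) : t - a i ≠ 0 := by
  intro h; rw [h, mul_zero] at ht; exact lt_irrefl _ ht

lemma hasDerivAt_vF (i : Fin n) (ht : 0 < ε i * (t - a i)) :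
    HasDerivAt (vF n a ε i) (vdF n a ε i t) t := by
  have hd : HasDerivAt (fun u => ε i * (u - a i)) (ε i * 1) t :=
    ((hasDerivAt_id t).sub_const (a i)).const_mul (ε i)
  have hr := Real.hasDerivAt_rpow_const (x := ε i * (t - a i)) (p := (-(1/2) : ℝ))
    (Or.inl (ne_of_gt ht))
  have h := hr.comp t hd
  have hval : (-(1/2) : ℝ) * (ε i * (t - a i)) ^ ((-(1/2) : ℝ) - 1) * (ε i * 1)
      = vdF n a ε i t := by
    have h1 : ((-(1/2) : ℝ) - 1) = (-(1/2) : ℝ) + (-1 : ℝ) := by ring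
    rw [h1, Real.rpow_add ht, Real.rpow_neg_one, vdF, vF]
    have hsne := sub_ne i ht
    have hεne : ε i ≠ 0 := by
      intro h0; rw [h0, zero_mul] at ht; exact lt_irrefl _ ht
    field_simp
  rw [← hval]
  exact h
end derivs


section derivs2
variable {n : ℕ} {a ε ξ : Fin n → ℝ} {t : ℝ}

lemma hasDerivAt_xfun (ht : ∀ i, 0 < ε i * (t - a i)) :
    HasDerivAt (xfun n a ε ξ) (wvF n a ε ξ t) t := by
  have h : HasDerivAt (fun u => ∑ i, ξ i * vF n a ε i u) (∑ i, ξ i * vdF n a ε i t) t :=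
    HasDerivAt.fun_sum fun i _ => (hasDerivAt_vF i (ht i)).const_mul (ξ i)
  exact h

lemma differentiableAt_wvF (ht : ∀ i, 0 < ε i * (t - a i)) :
    DifferentiableAt ℝ (wvF n a ε ξ) t := by
  apply DifferentiableAt.fun_sum
  intro i _
  apply DifferentiableAt.const_mul
  apply DifferentiableAt.div
  · exact ((hasDerivAt_vF i (ht i)).differentiableAt).neg
  · fun_prop
  · have h2 := sub_ne i (ht i)
    intro h; apply h2; linarith

lemma hasDerivAt_btwF (k : ℕ) (ht : ∀ i, 0 < ε i * (t - a i)) :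
    HasDerivAt (btwF n a ε ξ k) (bdF n a ε ξ k t) t := by
  have h : HasDerivAt (fun u => ∑ i, ξ i * vF n a ε i u * sigmaI n a i ((k : ℤ) - 1))
      (∑ i, ξ i * vdF n a ε i t * sigmaI n a i ((k : ℤ) - 1)) t :=
    HasDerivAt.fun_sum fun i _ =>
      (((hasDerivAt_vF i (ht i)).const_mul (ξ i)).mul_const (sigmaI n a i ((k : ℤ) - 1)))
  exact (h.const_mul ((-1 : ℝ) ^ k))

lemma hasDerivAt_ctwF (k : ℕ) (ht : ∀ i, 0 < ε i * (t - a i)) :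
    HasDerivAt (ctwF n a ε ξ k) (cdF n a ε ξ k t) t := by
  have h1 : HasDerivAt
      (fun u => ∑ i, ξ i ^ 2 * (vF n a ε i u * vF n a ε i u) * sigmaI n a i ((k : ℤ) - 1))
      (∑ i, ξ i ^ 2 * (vdF n a ε i t * vF n a ε i t + vF n a ε i t * vdF n a ε i t) *
        sigmaI n a i ((k : ℤ) - 1)) t := by
    apply HasDerivAt.fun_sum
    intro i _
    exact ((((hasDerivAt_vF i (ht i)).mul (hasDerivAt_vF i (ht i))).const_mul
      (ξ i ^ 2)).mul_const _)
  have h2 : HasDerivAt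
      (fun u => ∑ i, ∑ j ∈ Finset.univ.erase i,
        ξ i * ξ j * vF n a ε i u * vF n a ε j u *
          (sigmaIJ n a i j ((k : ℤ) - 1) + u * sigmaIJ n a i j ((k : ℤ) - 2)))
      (∑ i, ∑ j ∈ Finset.univ.erase i,
        ξ i * ξ j * ((vdF n a ε i t * vF n a ε j t + vF n a ε i t * vdF n a ε j t) *
            (sigmaIJ n a i j ((k : ℤ) - 1) + t * sigmaIJ n a i j ((k : ℤ) - 2)) +
          vF n a ε i t * vF n a ε j t * sigmaIJ n a i j ((k : ℤ) - 2))) t := by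
    apply HasDerivAt.fun_sum
    intro i _
    apply HasDerivAt.fun_sum
    intro j _
    have hlin : HasDerivAt
        (fun u => sigmaIJ n a i j ((k : ℤ) - 1) + u * sigmaIJ n a i j ((k : ℤ) - 2))
        (sigmaIJ n a i j ((k : ℤ) - 2)) t := by
      simpa using ((hasDerivAt_id t).mul_const (sigmaIJ n a i j ((k : ℤ) - 2))).const_add
        (sigmaIJ n a i j ((k : ℤ) - 1))
    have hprod : HasDerivAt (fun u => ξ i * ξ j * vF n a ε i u * vF n a ε j u)
        (ξ i * ξ j * (vdF n a ε i t * vF n a ε j t + vF n a ε i t * vdF n a ε j t)) t := by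
      have h3 := (((hasDerivAt_vF i (ht i)).const_mul (ξ i * ξ j)).mul (hasDerivAt_vF j (ht j)))
      refine h3.congr_deriv ?_
      ring
    have h4 := hprod.mul hlin
    refine h4.congr_deriv ?_
    ring
  exact ((h1.add h2).const_mul _)

lemma btilc_eq_btwF (k : ℕ) (ht : ∀ i, 0 < ε i * (t - a i)) :
    btilc n a ε ξ k t = btwF n a ε ξ k t := by
  rw [btilc, btwF]
  congr 1
  refine Finset.sum_congr rfl fun i _ => ?_
  rw [vF, div_eq_mul_inv, ← Real.rpow_neg (le_of_lt (ht i))]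

lemma ctilc_eq_ctwF (k : ℕ) (ht : ∀ i, 0 < ε i * (t - a i)) :
    ctilc n a ε ξ k t = ctwF n a ε ξ k t := by
  rw [ctilc, ctwF]
  congr 2
  · refine Finset.sum_congr rfl fun i _ => ?_
    congr 1
    rw [vF, ← Real.rpow_add (ht i), show (-(1/2) + -(1/2) : ℝ) = -1 by norm_num,
      Real.rpow_neg_one, div_eq_mul_inv]
  · refine Finset.sum_congr rfl fun i _ => Finset.sum_congr rfl fun j _ => ?_
    congr 1
    rw [vF, vF, div_eq_mul_inv, Real.mul_rpow (le_of_lt (ht i)) (le_of_lt (ht j)),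
      mul_inv, ← Real.rpow_neg (le_of_lt (ht i)), ← Real.rpow_neg (le_of_lt (ht j))]
    ring

end derivs2

section idents
variable {n : ℕ} {a ε ξ : Fin n → ℝ} {t : ℝ}

lemma I1 (hn : 1 ≤ n) (ht : ∀ i, 0 < ε i * (t - a i)) (k : ℕ) :
    -2 * bdF n a ε ξ (k+1) t + 2 * t * bdF n a ε ξ k t + btwF n a ε ξ k t
      = 2 * wvF n a ε ξ t * ((-1 : ℝ) ^ k * sigma n a (k : ℤ)) := by
  rw [bdF, bdF, btwF, wvF]
  have hcast : ((k + 1 : ℕ) : ℤ) - 1 = (k : ℤ) := by push_cast; ring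
  rw [hcast]
  simp only [Finset.mul_sum, Finset.sum_mul]
  rw [← Finset.sum_add_distrib, ← Finset.sum_add_distrib]
  refine Finset.sum_congr rfl fun i _ => ?_
  rw [sigma_rec hn a i (k : ℤ), vdF]
  have hs := sub_ne i (ht i)
  have hai : a i = t - (t - a i) := by ring
  rw [hai, pow_succ]
  have hs' : t - (t - (t - a i)) ≠ 0 := by rwa [sub_sub_cancel]
  field_simp
  ring

lemma erase_swap_sum (f : Fin n → Fin n → ℝ) :
    ∑ i, ∑ j ∈ Finset.univ.erase i, f i j = ∑ i, ∑ j ∈ Finset.univ.erase i, f j i := by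
  refine Finset.sum_comm' ?_
  intro x y
  simp [Finset.mem_erase, eq_comm]

lemma I2 (hn : 1 ≤ n) (ht : ∀ i, 0 < ε i * (t - a i)) (k : ℕ) :
    cdF n a ε ξ k t = - wvF n a ε ξ t * btwF n a ε ξ k t := by
  have hk12 : (k : ℤ) - 1 - 1 = (k : ℤ) - 2 := by ring
  have key : ∀ i j : Fin n, j ≠ i →
      ξ i * ξ j * ((vdF n a ε i t * vF n a ε j t + vF n a ε i t * vdF n a ε j t) *
          (sigmaIJ n a i j ((k : ℤ) - 1) + t * sigmaIJ n a i j ((k : ℤ) - 2)) +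
        vF n a ε i t * vF n a ε j t * sigmaIJ n a i j ((k : ℤ) - 2))
      = ξ i * ξ j * vF n a ε i t * vdF n a ε j t * sigmaI n a i ((k : ℤ) - 1) +
        ξ j * ξ i * vF n a ε j t * vdF n a ε i t * sigmaI n a j ((k : ℤ) - 1) := by
    intro i j hij
    rw [sigmaI_rec a i j hij ((k : ℤ) - 1), sigmaI_rec a j i (fun h => hij h.symm) ((k : ℤ) - 1),
      sigmaIJ_symm a j i, sigmaIJ_symm a j i, hk12, vdF, vdF]
    have hsi := sub_ne i (ht i)
    have hsj := sub_ne j (ht j)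
    have hai : a i = t - (t - a i) := by ring
    have haj : a j = t - (t - a j) := by ring
    rw [hai, haj]
    have hsi' : t - (t - (t - a i)) ≠ 0 := by rwa [sub_sub_cancel]
    have hsj' : t - (t - (t - a j)) ≠ 0 := by rwa [sub_sub_cancel]
    field_simp
    ring
  rw [cdF, btwF, wvF]
  have hswap : ∑ i, ∑ j ∈ Finset.univ.erase i,
        ξ i * ξ j * vF n a ε i t * vdF n a ε j t * sigmaI n a i ((k : ℤ) - 1)
      = ∑ i, ∑ j ∈ Finset.univ.erase i,
        ξ j * ξ i * vF n a ε j t * vdF n a ε i t * sigmaI n a j ((k : ℤ) - 1) :=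
    erase_swap_sum _
  have hoff : ∑ i, ∑ j ∈ Finset.univ.erase i,
        ξ i * ξ j * ((vdF n a ε i t * vF n a ε j t + vF n a ε i t * vdF n a ε j t) *
            (sigmaIJ n a i j ((k : ℤ) - 1) + t * sigmaIJ n a i j ((k : ℤ) - 2)) +
          vF n a ε i t * vF n a ε j t * sigmaIJ n a i j ((k : ℤ) - 2))
      = 2 * ∑ i, ∑ j ∈ Finset.univ.erase i,
          ξ i * ξ j * vF n a ε i t * vdF n a ε j t * sigmaI n a i ((k : ℤ) - 1) := by
    rw [show ∑ i, ∑ j ∈ Finset.univ.erase i,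
        ξ i * ξ j * ((vdF n a ε i t * vF n a ε j t + vF n a ε i t * vdF n a ε j t) *
            (sigmaIJ n a i j ((k : ℤ) - 1) + t * sigmaIJ n a i j ((k : ℤ) - 2)) +
          vF n a ε i t * vF n a ε j t * sigmaIJ n a i j ((k : ℤ) - 2))
      = ∑ i, ∑ j ∈ Finset.univ.erase i,
          (ξ i * ξ j * vF n a ε i t * vdF n a ε j t * sigmaI n a i ((k : ℤ) - 1) +
           ξ j * ξ i * vF n a ε j t * vdF n a ε i t * sigmaI n a j ((k : ℤ) - 1)) from
      Finset.sum_congr rfl fun i _ => Finset.sum_congr rfl fun j hj =>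
        key i j (Finset.mem_erase.1 hj).1]
    simp only [Finset.sum_add_distrib]
    rw [← hswap]
    ring
  rw [hoff]
  have hexp : ∀ i : Fin n, ξ i * vF n a ε i t * sigmaI n a i ((k : ℤ) - 1) *
        (∑ j, ξ j * vdF n a ε j t)
      = ξ i ^ 2 * (vdF n a ε i t * vF n a ε i t + vF n a ε i t * vdF n a ε i t) *
          sigmaI n a i ((k : ℤ) - 1) / 2 +
        ∑ j ∈ Finset.univ.erase i,
          ξ i * ξ j * vF n a ε i t * vdF n a ε j t * sigmaI n a i ((k : ℤ) - 1) := by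
    intro i
    rw [← Finset.add_sum_erase _ _ (Finset.mem_univ i), mul_add, Finset.mul_sum]
    congr 1
    · ring
    · exact Finset.sum_congr rfl fun j _ => by ring
  have hR : -(∑ i, ξ i * vdF n a ε i t) * ((-1 : ℝ) ^ k *
        ∑ i, ξ i * vF n a ε i t * sigmaI n a i ((k : ℤ) - 1))
      = (-1 : ℝ) ^ (k + 1) *
        ∑ i, (ξ i * vF n a ε i t * sigmaI n a i ((k : ℤ) - 1) * (∑ j, ξ j * vdF n a ε j t)) := by
    rw [← Finset.sum_mul, pow_succ]
    ring
  rw [hR, show (∑ i, (ξ i * vF n a ε i t * sigmaI n a i ((k : ℤ) - 1) *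
        (∑ j, ξ j * vdF n a ε j t))) = _ from Finset.sum_congr rfl fun i _ => hexp i]
  rw [Finset.sum_add_distrib]
  rw [← Finset.sum_div]
  ring
end idents

section core
variable {n : ℕ} {a ε ξ : Fin n → ℝ} {A : ℝ}

lemma btwF_zero (t : ℝ) : btwF n a ε ξ 0 t = 0 := by
  have h : ∀ i : Fin n, sigmaI n a i (-1) = 0 :=
    fun i => sigmaI_neg a i (by norm_num)
  simp [btwF, h]

lemma bdF_zero (t : ℝ) : bdF n a ε ξ 0 t = 0 := by
  have h : ∀ i : Fin n, sigmaI n a i (-1) = 0 :=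
    fun i => sigmaI_neg a i (by norm_num)
  simp [bdF, h]

lemma btwF_big (hn : 1 ≤ n) {k : ℕ} (hk : n + 1 ≤ k) (t : ℝ) : btwF n a ε ξ k t = 0 := by
  have h : ∀ i : Fin n, sigmaI n a i ((k : ℤ) - 1) = 0 :=
    fun i => sigmaI_gt hn a i (by omega)
  simp [btwF, h]

lemma bdF_big (hn : 1 ≤ n) {k : ℕ} (hk : n + 1 ≤ k) (t : ℝ) : bdF n a ε ξ k t = 0 := by
  have h : ∀ i : Fin n, sigmaI n a i ((k : ℤ) - 1) = 0 :=
    fun i => sigmaI_gt hn a i (by omega)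
  simp [bdF, h]

lemma coreS1 (hn : 1 ≤ n) (ht : ∀ i, 0 < ε i * (A - a i))
    (hwvne : wvF n a ε ξ A ≠ 0) (K py : ℝ) :
    (∑ k ∈ Finset.Icc 1 n, (A / wvF n a ε ξ A) *
        (btwF n a ε ξ k A * K ^ (n - k) * py ^ (2 * k - 1) * py ^ 2 -
          2 * bdF n a ε ξ k A * K ^ (n - k) * (K - A * py ^ 2) * py ^ (2 * k - 1)))
      + ∑ k ∈ Finset.range (n + 1),
          (-(2 * A * ((-1 : ℝ) ^ k * sigma n a (k : ℤ)) * K ^ (n - k) * py ^ (2 * k + 1)))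
      = 0 := by
  set g : ℕ → ℝ := fun k =>
    (A / wvF n a ε ξ A) * (2 * bdF n a ε ξ k A) * K ^ (n + 1 - k) * py ^ (2 * k - 1) with hg
  set h : ℕ → ℝ := fun k =>
    (A / wvF n a ε ξ A) * (btwF n a ε ξ k A + 2 * A * bdF n a ε ξ k A) * K ^ (n - k) *
      py ^ (2 * k + 1) with hh
  have hL : ∑ k ∈ Finset.Icc 1 n, (A / wvF n a ε ξ A) *
        (btwF n a ε ξ k A * K ^ (n - k) * py ^ (2 * k - 1) * py ^ 2 -
          2 * bdF n a ε ξ k A * K ^ (n - k) * (K - A * py ^ 2) * py ^ (2 * k - 1))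
      = ∑ k ∈ Finset.range (n + 2), (h k - g k) := by
    rw [show ∑ k ∈ Finset.Icc 1 n, (A / wvF n a ε ξ A) *
        (btwF n a ε ξ k A * K ^ (n - k) * py ^ (2 * k - 1) * py ^ 2 -
          2 * bdF n a ε ξ k A * K ^ (n - k) * (K - A * py ^ 2) * py ^ (2 * k - 1))
      = ∑ k ∈ Finset.Icc 1 n, (h k - g k) from Finset.sum_congr rfl fun k hk => by
        obtain ⟨hk1, hk2⟩ := Finset.mem_Icc.1 hk
        simp only [hg, hh]
        have e1 : n + 1 - k = (n - k) + 1 := by omega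
        have e2 : 2 * k + 1 = (2 * k - 1) + 2 := by omega
        rw [e1, e2, pow_succ, pow_add]
        ring]
    refine Finset.sum_subset (fun x hx => ?_) (fun x hx hx2 => ?_)
    · simp only [Finset.mem_Icc] at hx
      simp only [Finset.mem_range]
      omega
    · simp only [Finset.mem_range] at hx
      simp only [Finset.mem_Icc] at hx2
      have hx0 : x = 0 ∨ x = n + 1 := by omega
      rcases hx0 with rfl | rfl
      · simp only [hh, hg]
        rw [btwF_zero, bdF_zero]
        ring
      · simp only [hh, hg]
        rw [btwF_big hn (le_refl _), bdF_big hn (le_refl _)]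
        ring
  have hR : ∑ k ∈ Finset.range (n + 1),
        (-(2 * A * ((-1 : ℝ) ^ k * sigma n a (k : ℤ)) * K ^ (n - k) * py ^ (2 * k + 1)))
      = ∑ k ∈ Finset.range (n + 2), (g (k + 1) - h k) := by
    rw [show ∑ k ∈ Finset.range (n + 1),
        (-(2 * A * ((-1 : ℝ) ^ k * sigma n a (k : ℤ)) * K ^ (n - k) * py ^ (2 * k + 1)))
      = ∑ k ∈ Finset.range (n + 1), (g (k + 1) - h k) from Finset.sum_congr rfl fun k hk => by
        have hI := I1 (a := a) (ε := ε) (ξ := ξ) (t := A) hn ht k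
        simp only [hg, hh]
        have e1 : n + 1 - (k + 1) = n - k := by omega
        have e2 : 2 * (k + 1) - 1 = 2 * k + 1 := by omega
        rw [e1, e2]
        have h2 : 2 * A * ((-1 : ℝ) ^ k * sigma n a (k : ℤ))
            = (A / wvF n a ε ξ A) * (-2 * bdF n a ε ξ (k + 1) A + 2 * A * bdF n a ε ξ k A
              + btwF n a ε ξ k A) := by
          rw [hI]
          field_simp
        rw [h2]
        ring]
    refine Finset.sum_subset (fun x hx => ?_) (fun x hx hx2 => ?_)
    · simp only [Finset.mem_range] at hx ⊢
      omega
    · simp only [Finset.mem_range] at hx hx2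
      have hx0 : x = n + 1 := by omega
      subst hx0
      simp only [hg, hh]
      rw [btwF_big hn (le_refl _), bdF_big (k := n + 1 + 1) hn (by omega),
        bdF_big (k := n + 1) hn (le_refl _)]
      ring
  rw [hL, hR, ← Finset.sum_add_distrib]
  rw [show ∑ k ∈ Finset.range (n + 2), (h k - g k + (g (k + 1) - h k))
    = ∑ k ∈ Finset.range (n + 2), (g (k + 1) - g k) from
    Finset.sum_congr rfl fun k _ => by ring]
  rw [Finset.sum_range_sub g (n + 2)]
  simp only [hg]
  rw [bdF_zero, bdF_big hn (by omega)]
  ring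

end core

lemma pbH_py (n : ℕ) (a ε ξ : Fin n → ℝ) (A y pa py : ℝ) :
    pb (HF n a ε ξ) (fun _A _y _pa py => py) A y pa py = 0 := by
  simp [pb, HF, PiF]

lemma pbH_master (n : ℕ) (a ε ξ : Fin n → ℝ) {A : ℝ} (w' : ℝ)
    (hW : HasDerivAt (deriv (xfun n a ε ξ)) w' A)
    (hwne : deriv (xfun n a ε ξ) A ≠ 0)
    (y pa py : ℝ)
    {ι : Type} (s : Finset ι) (c : ι → ℝ → ℝ) (c' : ι → ℝ)
    (hc : ∀ i ∈ s, HasDerivAt (c i) (c' i) A)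
    (m e p q : ι → ℕ) (he : ∀ i ∈ s, e i ≤ 1) :
    pb (HF n a ε ξ)
      (fun A y pa py => ∑ i ∈ s,
        c i A * (HF n a ε ξ A y pa py) ^ (m i) * (PiF n a ε ξ A y pa py) ^ (e i) *
          py ^ (p i) * y ^ (q i)) A y pa py
    = ∑ i ∈ s,
        ((A / deriv (xfun n a ε ξ) A) *
          (c i A * (e i : ℝ) * (HF n a ε ξ A y pa py) ^ (m i) * py ^ (p i + 2) * y ^ (q i)
            - 2 * c' i * (HF n a ε ξ A y pa py) ^ (m i) *
              (PiF n a ε ξ A y pa py) ^ (e i + 1) * py ^ (p i) * y ^ (q i))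
          - 2 * A * (q i : ℝ) * c i A * (HF n a ε ξ A y pa py) ^ (m i) *
              (PiF n a ε ξ A y pa py) ^ (e i) * py ^ (p i + 1) * y ^ (q i - 1)) := by
  set w : ℝ := deriv (xfun n a ε ξ) A with hw
  have hPpa : HasDerivAt (fun t => A * t / w) (A / w) pa := by
    simpa using ((hasDerivAt_id pa).const_mul A).div_const w
  have hKpa : HasDerivAt (fun t => (A * t / w) ^ 2 + A * py ^ 2)
      (2 * (A * pa / w) * (A / w)) pa := by
    simpa using (hPpa.pow 2).add_const (A * py ^ 2)
  have hKpy : HasDerivAt (fun t => (A * pa / w) ^ 2 + A * t ^ 2) (2 * A * py) py := by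
    have h := ((hasDerivAt_pow 2 py).const_mul A).const_add ((A * pa / w) ^ 2)
    refine h.congr_deriv ?_
    push_cast
    ring
  have hPA : HasDerivAt (fun t => t * pa / deriv (xfun n a ε ξ) t)
      ((pa * w - A * pa * w') / w ^ 2) A := by
    have h := ((hasDerivAt_id A).mul_const pa).div hW hwne
    refine h.congr_deriv ?_
    simp only [id_eq, ← hw]
    ring
  set PA : ℝ := (pa * w - A * pa * w') / w ^ 2 with hPAdef
  have hKA : HasDerivAt (fun t => (t * pa / deriv (xfun n a ε ξ) t) ^ 2 + t * py ^ 2)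
      (2 * (A * pa / w) * PA + py ^ 2) A := by
    have h := (hPA.pow 2).add ((hasDerivAt_id A).mul_const (py ^ 2))
    refine h.congr_deriv ?_
    push_cast
    simp only [id_eq, ← hw]
    ring
  -- slice derivatives of the sum
  have hgpa : deriv (fun t => ∑ i ∈ s,
      c i A * ((A * t / w) ^ 2 + A * py ^ 2) ^ (m i) * (A * t / w) ^ (e i) *
        py ^ (p i) * y ^ (q i)) pa
      = ∑ i ∈ s,
        (c i A * ((m i : ℝ) * ((A * pa / w) ^ 2 + A * py ^ 2) ^ (m i - 1) *
              (2 * (A * pa / w) * (A / w))) * (A * pa / w) ^ (e i) * py ^ (p i) * y ^ (q i)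
          + c i A * ((A * pa / w) ^ 2 + A * py ^ 2) ^ (m i) *
              ((e i : ℝ) * (A * pa / w) ^ (e i - 1) * (A / w)) * py ^ (p i) * y ^ (q i)) := by
    refine HasDerivAt.deriv (HasDerivAt.fun_sum fun i hi => ?_)
    have h := ((((hKpa.fun_pow (m i)).const_mul (c i A)).fun_mul (hPpa.fun_pow (e i))).mul_const
      (py ^ (p i))).mul_const (y ^ (q i))
    refine h.congr_deriv ?_
    ring
  have hgy : deriv (fun t => ∑ i ∈ s,
      c i A * ((A * pa / w) ^ 2 + A * py ^ 2) ^ (m i) * (A * pa / w) ^ (e i) *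
        py ^ (p i) * t ^ (q i)) y
      = ∑ i ∈ s,
        c i A * ((A * pa / w) ^ 2 + A * py ^ 2) ^ (m i) * (A * pa / w) ^ (e i) * py ^ (p i) *
          ((q i : ℝ) * y ^ (q i - 1)) := by
    refine HasDerivAt.deriv (HasDerivAt.fun_sum fun i hi => ?_)
    have h := (hasDerivAt_pow (q i) y).const_mul
      (c i A * ((A * pa / w) ^ 2 + A * py ^ 2) ^ (m i) * (A * pa / w) ^ (e i) * py ^ (p i))
    exact h
  have hgA : deriv (fun t => ∑ i ∈ s,
      c i t * ((t * pa / deriv (xfun n a ε ξ) t) ^ 2 + t * py ^ 2) ^ (m i) *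
        (t * pa / deriv (xfun n a ε ξ) t) ^ (e i) * py ^ (p i) * y ^ (q i)) A
      = ∑ i ∈ s,
        (c' i * ((A * pa / w) ^ 2 + A * py ^ 2) ^ (m i) * (A * pa / w) ^ (e i) *
            py ^ (p i) * y ^ (q i)
          + c i A * ((m i : ℝ) * ((A * pa / w) ^ 2 + A * py ^ 2) ^ (m i - 1) *
              (2 * (A * pa / w) * PA + py ^ 2)) * (A * pa / w) ^ (e i) * py ^ (p i) * y ^ (q i)
          + c i A * ((A * pa / w) ^ 2 + A * py ^ 2) ^ (m i) *
              ((e i : ℝ) * (A * pa / w) ^ (e i - 1) * PA) * py ^ (p i) * y ^ (q i)) := by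
    refine HasDerivAt.deriv (HasDerivAt.fun_sum fun i hi => ?_)
    have h := ((((hc i hi).fun_mul (hKA.fun_pow (m i))).fun_mul (hPA.fun_pow (e i))).mul_const
      (py ^ (p i))).mul_const (y ^ (q i))
    refine h.congr_deriv ?_
    simp only [id_eq, ← hw]
    ring
  have hHA : deriv (fun t => (t * pa / deriv (xfun n a ε ξ) t) ^ 2 + t * py ^ 2) A
      = 2 * (A * pa / w) * PA + py ^ 2 := hKA.deriv
  have hHpa : deriv (fun t => (A * t / w) ^ 2 + A * py ^ 2) pa
      = 2 * (A * pa / w) * (A / w) := hKpa.deriv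
  have hHpy : deriv (fun t => (A * pa / w) ^ 2 + A * t ^ 2) py = 2 * A * py := hKpy.deriv
  have hHy : deriv (fun _t : ℝ => (A * pa / w) ^ 2 + A * py ^ 2) y = 0 := deriv_const _ _
  simp only [pb, HF, PiF, ← hw]
  rw [hgpa, hgA, hgy, hHA, hHpa, hHpy, hHy]
  simp only [zero_mul, add_zero]
  rw [Finset.mul_sum, Finset.mul_sum, Finset.mul_sum]
  rw [← Finset.sum_sub_distrib, ← Finset.sum_sub_distrib]
  refine Finset.sum_congr rfl fun i hi => ?_
  rcases Nat.le_one_iff_eq_zero_or_eq_one.1 (he i hi) with h | h <;> rw [h] <;>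
    · push_cast
      simp only [pow_zero, pow_one, Nat.zero_sub, Nat.sub_self]
      ring

/-- On `U = I × ℝ³`, the hamiltonian `H` Poisson-commutes with `p_y`,
`S₁` and `S₂`: `{H, p_y} = 0`, `{H, S₁} = 0` and `{H, S₂} = 0`. -/
theorem stmt19 (n : ℕ) (hn : 1 ≤ n) (a : Fin n → ℝ) (ha : Function.Injective a)
    (ε : Fin n → ℝ) (hε : ∀ i, ε i = 1 ∨ ε i = -1)
    (I : Set ℝ) (hIopen : IsOpen I) (hIconn : I.OrdConnected)
    (hΔ : ∀ i, ∀ t ∈ I, 0 < ε i * (t - a i))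
    (ξ : Fin n → ℝ)
    (hx' : ∀ t ∈ I, deriv (xfun n a ε ξ) t ≠ 0) :
    ∀ A ∈ I, ∀ y pa py : ℝ,
      pb (HF n a ε ξ) (fun _A _y _pa py => py) A y pa py = 0 ∧
      pb (HF n a ε ξ) (S1F n a ε ξ) A y pa py = 0 ∧
      pb (HF n a ε ξ) (S2F n a ε ξ) A y pa py = 0 := by
  intro A hA y pa py
  have hΔA : ∀ i, 0 < ε i * (A - a i) := fun i => hΔ i A hA
  have hIn : I ∈ nhds A := hIopen.mem_nhds hA
  have hWI : ∀ t ∈ I, deriv (xfun n a ε ξ) t = wvF n a ε ξ t :=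
    fun t ht => (hasDerivAt_xfun (fun i => hΔ i t ht)).deriv
  have hWev : deriv (xfun n a ε ξ) =ᶠ[nhds A] wvF n a ε ξ :=
    Filter.eventuallyEq_of_mem hIn hWI
  have hWA : HasDerivAt (deriv (xfun n a ε ξ)) (deriv (wvF n a ε ξ) A) A :=
    ((differentiableAt_wvF hΔA).hasDerivAt).congr_of_eventuallyEq hWev
  have hwne : deriv (xfun n a ε ξ) A ≠ 0 := hx' A hA
  have hwv : deriv (xfun n a ε ξ) A = wvF n a ε ξ A := hWI A hA
  have hwvne : wvF n a ε ξ A ≠ 0 := by rw [← hwv]; exact hwne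
  have hbt : ∀ k : ℕ, HasDerivAt (btilc n a ε ξ k) (bdF n a ε ξ k A) A := fun k =>
    (hasDerivAt_btwF k hΔA).congr_of_eventuallyEq
      (Filter.eventuallyEq_of_mem hIn (fun t ht => btilc_eq_btwF k (fun i => hΔ i t ht)))
  have hct : ∀ k : ℕ, HasDerivAt (ctilc n a ε ξ k) (cdF n a ε ξ k A) A := fun k =>
    (hasDerivAt_ctwF k hΔA).congr_of_eventuallyEq
      (Filter.eventuallyEq_of_mem hIn (fun t ht => ctilc_eq_ctwF k (fun i => hΔ i t ht)))
  have hPv2 : (PiF n a ε ξ A y pa py) ^ 2 = HF n a ε ξ A y pa py - A * py ^ 2 := by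
    simp [HF]
  have hcore := coreS1 (a := a) (ε := ε) (ξ := ξ) (A := A) hn hΔA hwvne
    (HF n a ε ξ A y pa py) py
  refine ⟨pbH_py n a ε ξ A y pa py, ?_, ?_⟩
  · -- S1
    have hc1 : ∀ i ∈ (Finset.Icc 1 n).disjSum (Finset.range (n + 1)),
        HasDerivAt ((Sum.elim (btilc n a ε ξ)
            (fun k : ℕ => fun _ : ℝ => (-1 : ℝ) ^ k * sigma n a (k : ℤ))) i)
          ((Sum.elim (fun k : ℕ => bdF n a ε ξ k A) (fun _ : ℕ => (0 : ℝ))) i) A := by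
      rintro (k | k) _
      · exact hbt k
      · exact hasDerivAt_const A _
    have he1 : ∀ i ∈ (Finset.Icc 1 n).disjSum (Finset.range (n + 1)),
        (Sum.elim (fun _ : ℕ => 1) (fun _ : ℕ => 0)) i ≤ 1 := by
      rintro (k | k) _ <;> simp
    have hS1 : S1F n a ε ξ = fun A y pa py =>
        ∑ i ∈ (Finset.Icc 1 n).disjSum (Finset.range (n + 1)),
          (Sum.elim (btilc n a ε ξ)
              (fun k : ℕ => fun _ : ℝ => (-1 : ℝ) ^ k * sigma n a (k : ℤ))) i A *
            (HF n a ε ξ A y pa py) ^ ((Sum.elim (fun k : ℕ => n - k) (fun k : ℕ => n - k)) i) *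
            (PiF n a ε ξ A y pa py) ^ ((Sum.elim (fun _ : ℕ => 1) (fun _ : ℕ => 0)) i) *
            py ^ ((Sum.elim (fun k : ℕ => 2 * k - 1) (fun k : ℕ => 2 * k)) i) *
            y ^ ((Sum.elim (fun _ : ℕ => 0) (fun _ : ℕ => 1)) i) := by
      funext A' y' pa' py'
      rw [S1F, Q1F, GF, Finset.sum_disjSum]
      congr 1
      · exact Finset.sum_congr rfl fun k _ => by
          simp only [Sum.elim_inl]
          ring
      · rw [Finset.mul_sum]
        exact Finset.sum_congr rfl fun k _ => by
          simp only [Sum.elim_inr]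
          ring
    rw [hS1, pbH_master n a ε ξ (deriv (wvF n a ε ξ) A) hWA hwne y pa py
      ((Finset.Icc 1 n).disjSum (Finset.range (n + 1)))
      (Sum.elim (btilc n a ε ξ) (fun k : ℕ => fun _ : ℝ => (-1 : ℝ) ^ k * sigma n a (k : ℤ)))
      (Sum.elim (fun k : ℕ => bdF n a ε ξ k A) (fun _ : ℕ => (0 : ℝ))) hc1
      (Sum.elim (fun k : ℕ => n - k) (fun k : ℕ => n - k))
      (Sum.elim (fun _ : ℕ => 1) (fun _ : ℕ => 0))
      (Sum.elim (fun k : ℕ => 2 * k - 1) (fun k : ℕ => 2 * k))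
      (Sum.elim (fun _ : ℕ => 0) (fun _ : ℕ => 1)) he1,
      Finset.sum_disjSum]
    simp only [Sum.elim_inl, Sum.elim_inr, Nat.cast_one, Nat.cast_zero, Nat.cast_ofNat,
      Nat.reduceSub, Nat.reduceAdd, hwv]
    rw [show (∑ k ∈ Finset.Icc 1 n,
        (A / wvF n a ε ξ A *
          (btilc n a ε ξ k A * 1 * HF n a ε ξ A y pa py ^ (n - k) * py ^ (2 * k - 1 + 2) *
              y ^ 0 -
            2 * bdF n a ε ξ k A * HF n a ε ξ A y pa py ^ (n - k) *
              PiF n a ε ξ A y pa py ^ (1 + 1) * py ^ (2 * k - 1) * y ^ 0) -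
          2 * A * 0 * btilc n a ε ξ k A * HF n a ε ξ A y pa py ^ (n - k) *
            PiF n a ε ξ A y pa py ^ 1 * py ^ (2 * k - 1 + 1) * y ^ (0 - 1)))
      = ∑ k ∈ Finset.Icc 1 n, (A / wvF n a ε ξ A) *
        (btwF n a ε ξ k A * (HF n a ε ξ A y pa py) ^ (n - k) * py ^ (2 * k - 1) * py ^ 2 -
          2 * bdF n a ε ξ k A * (HF n a ε ξ A y pa py) ^ (n - k) *
            (HF n a ε ξ A y pa py - A * py ^ 2) * py ^ (2 * k - 1)) from
      Finset.sum_congr rfl fun k _ => by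
        rw [btilc_eq_btwF k hΔA, show (1 + 1 : ℕ) = 2 from rfl, hPv2]
        ring]
    rw [show (∑ k ∈ Finset.range (n + 1),
        (A / wvF n a ε ξ A *
          ((-1 : ℝ) ^ k * sigma n a (k : ℤ) * 0 * HF n a ε ξ A y pa py ^ (n - k) *
              py ^ (2 * k + 2) * y ^ 1 -
            2 * 0 * HF n a ε ξ A y pa py ^ (n - k) * PiF n a ε ξ A y pa py ^ (0 + 1) *
              py ^ (2 * k) * y ^ 1) -
          2 * A * 1 * ((-1 : ℝ) ^ k * sigma n a (k : ℤ)) * HF n a ε ξ A y pa py ^ (n - k) *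
            PiF n a ε ξ A y pa py ^ 0 * py ^ (2 * k + 1) * y ^ 0))
      = ∑ k ∈ Finset.range (n + 1),
          (-(2 * A * ((-1 : ℝ) ^ k * sigma n a (k : ℤ)) *
            (HF n a ε ξ A y pa py) ^ (n - k) * py ^ (2 * k + 1))) from
      Finset.sum_congr rfl fun k _ => by ring]
    exact hcore
  · -- S2
    have hc2 : ∀ i ∈ (Finset.Icc 1 n).disjSum
        ((Finset.Icc 1 n).disjSum (Finset.range (n + 1))),
        HasDerivAt ((Sum.elim (ctilc n a ε ξ) (Sum.elim (btilc n a ε ξ)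
            (fun k : ℕ => fun _ : ℝ => (-1 : ℝ) ^ k * sigma n a (k : ℤ) / 2))) i)
          ((Sum.elim (fun k : ℕ => cdF n a ε ξ k A)
            (Sum.elim (fun k : ℕ => bdF n a ε ξ k A) (fun _ : ℕ => (0 : ℝ)))) i) A := by
      rintro (k | k | k) _
      · exact hct k
      · exact hbt k
      · exact hasDerivAt_const A _
    have he2 : ∀ i ∈ (Finset.Icc 1 n).disjSum
        ((Finset.Icc 1 n).disjSum (Finset.range (n + 1))),
        (Sum.elim (fun _ : ℕ => 0) (Sum.elim (fun _ : ℕ => 1) (fun _ : ℕ => 0))) i ≤ 1 := by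
      rintro (k | k | k) _ <;> simp
    have hS2 : S2F n a ε ξ = fun A y pa py =>
        ∑ i ∈ (Finset.Icc 1 n).disjSum ((Finset.Icc 1 n).disjSum (Finset.range (n + 1))),
          (Sum.elim (ctilc n a ε ξ) (Sum.elim (btilc n a ε ξ)
              (fun k : ℕ => fun _ : ℝ => (-1 : ℝ) ^ k * sigma n a (k : ℤ) / 2))) i A *
            (HF n a ε ξ A y pa py) ^
              ((Sum.elim (fun k : ℕ => n - k)
                (Sum.elim (fun k : ℕ => n - k) (fun k : ℕ => n - k))) i) *
            (PiF n a ε ξ A y pa py) ^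
              ((Sum.elim (fun _ : ℕ => 0) (Sum.elim (fun _ : ℕ => 1) (fun _ : ℕ => 0))) i) *
            py ^ ((Sum.elim (fun k : ℕ => 2 * k)
              (Sum.elim (fun k : ℕ => 2 * k - 1) (fun k : ℕ => 2 * k))) i) *
            y ^ ((Sum.elim (fun _ : ℕ => 0)
              (Sum.elim (fun _ : ℕ => 1) (fun _ : ℕ => 2))) i) := by
      funext A' y' pa' py'
      rw [S2F, Q2F, Q1F, GF, Finset.sum_disjSum, Finset.sum_disjSum, add_assoc]
      congr 1
      · exact Finset.sum_congr rfl fun k _ => by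
          simp only [Sum.elim_inl]
          ring
      congr 1
      · rw [Finset.mul_sum]
        exact Finset.sum_congr rfl fun k _ => by
          simp only [Sum.elim_inr, Sum.elim_inl]
          ring
      · rw [Finset.mul_sum]
        exact Finset.sum_congr rfl fun k _ => by
          simp only [Sum.elim_inr]
          ring
    rw [hS2, pbH_master n a ε ξ (deriv (wvF n a ε ξ) A) hWA hwne y pa py
      ((Finset.Icc 1 n).disjSum ((Finset.Icc 1 n).disjSum (Finset.range (n + 1))))
      (Sum.elim (ctilc n a ε ξ) (Sum.elim (btilc n a ε ξ)
        (fun k : ℕ => fun _ : ℝ => (-1 : ℝ) ^ k * sigma n a (k : ℤ) / 2)))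
      (Sum.elim (fun k : ℕ => cdF n a ε ξ k A)
        (Sum.elim (fun k : ℕ => bdF n a ε ξ k A) (fun _ : ℕ => (0 : ℝ)))) hc2
      (Sum.elim (fun k : ℕ => n - k) (Sum.elim (fun k : ℕ => n - k) (fun k : ℕ => n - k)))
      (Sum.elim (fun _ : ℕ => 0) (Sum.elim (fun _ : ℕ => 1) (fun _ : ℕ => 0)))
      (Sum.elim (fun k : ℕ => 2 * k)
        (Sum.elim (fun k : ℕ => 2 * k - 1) (fun k : ℕ => 2 * k)))
      (Sum.elim (fun _ : ℕ => 0) (Sum.elim (fun _ : ℕ => 1) (fun _ : ℕ => 2))) he2,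
      Finset.sum_disjSum, Finset.sum_disjSum]
    simp only [Sum.elim_inl, Sum.elim_inr, Nat.cast_one, Nat.cast_zero, Nat.cast_ofNat,
      Nat.reduceSub, Nat.reduceAdd, hwv]
    rw [show (∑ k ∈ Finset.Icc 1 n,
        (A / wvF n a ε ξ A *
          (ctilc n a ε ξ k A * 0 * HF n a ε ξ A y pa py ^ (n - k) * py ^ (2 * k + 2) *
              y ^ 0 -
            2 * cdF n a ε ξ k A * HF n a ε ξ A y pa py ^ (n - k) *
              PiF n a ε ξ A y pa py ^ 1 * py ^ (2 * k) * y ^ 0) -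
          2 * A * 0 * ctilc n a ε ξ k A * HF n a ε ξ A y pa py ^ (n - k) *
            PiF n a ε ξ A y pa py ^ 0 * py ^ (2 * k + 1) * y ^ (0 - 1)))
      = ∑ k ∈ Finset.Icc 1 n,
          2 * A * btwF n a ε ξ k A * HF n a ε ξ A y pa py ^ (n - k) *
            PiF n a ε ξ A y pa py * py ^ (2 * k) from
      Finset.sum_congr rfl fun k _ => by
        rw [I2 hn hΔA k]
        field_simp
        ring]
    rw [show (∑ k ∈ Finset.Icc 1 n,
        (A / wvF n a ε ξ A *
          (btilc n a ε ξ k A * 1 * HF n a ε ξ A y pa py ^ (n - k) * py ^ (2 * k - 1 + 2) *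
              y ^ 1 -
            2 * bdF n a ε ξ k A * HF n a ε ξ A y pa py ^ (n - k) *
              PiF n a ε ξ A y pa py ^ 2 * py ^ (2 * k - 1) * y ^ 1) -
          2 * A * 1 * btilc n a ε ξ k A * HF n a ε ξ A y pa py ^ (n - k) *
            PiF n a ε ξ A y pa py ^ 1 * py ^ (2 * k - 1 + 1) * y ^ (1 - 1)))
      = ∑ k ∈ Finset.Icc 1 n,
          (y * ((A / wvF n a ε ξ A) *
            (btwF n a ε ξ k A * HF n a ε ξ A y pa py ^ (n - k) * py ^ (2 * k - 1) * py ^ 2 -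
              2 * bdF n a ε ξ k A * HF n a ε ξ A y pa py ^ (n - k) *
                (HF n a ε ξ A y pa py - A * py ^ 2) * py ^ (2 * k - 1)))
          - 2 * A * btwF n a ε ξ k A * HF n a ε ξ A y pa py ^ (n - k) *
              PiF n a ε ξ A y pa py * py ^ (2 * k)) from
      Finset.sum_congr rfl fun k hk => by
        obtain ⟨hk1, _⟩ := Finset.mem_Icc.1 hk
        rw [btilc_eq_btwF k hΔA, hPv2, show 2 * k - 1 + 1 = 2 * k by omega]
        ring]
    rw [show (∑ k ∈ Finset.range (n + 1),
        (A / wvF n a ε ξ A *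
          ((-1 : ℝ) ^ k * sigma n a (k : ℤ) / 2 * 0 * HF n a ε ξ A y pa py ^ (n - k) *
              py ^ (2 * k + 2) * y ^ 2 -
            2 * 0 * HF n a ε ξ A y pa py ^ (n - k) * PiF n a ε ξ A y pa py ^ 1 *
              py ^ (2 * k) * y ^ 2) -
          2 * A * 2 * ((-1 : ℝ) ^ k * sigma n a (k : ℤ) / 2) *
            HF n a ε ξ A y pa py ^ (n - k) * PiF n a ε ξ A y pa py ^ 0 *
            py ^ (2 * k + 1) * y ^ 1))
      = ∑ k ∈ Finset.range (n + 1),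
          (y * (-(2 * A * ((-1 : ℝ) ^ k * sigma n a (k : ℤ)) *
            HF n a ε ξ A y pa py ^ (n - k) * py ^ (2 * k + 1)))) from
      Finset.sum_congr rfl fun k _ => by ring]
    rw [Finset.sum_sub_distrib]
    have h1 : (∑ k ∈ Finset.Icc 1 n,
        (y * ((A / wvF n a ε ξ A) *
          (btwF n a ε ξ k A * HF n a ε ξ A y pa py ^ (n - k) * py ^ (2 * k - 1) * py ^ 2 -
            2 * bdF n a ε ξ k A * HF n a ε ξ A y pa py ^ (n - k) *
              (HF n a ε ξ A y pa py - A * py ^ 2) * py ^ (2 * k - 1)))))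
        = y * ∑ k ∈ Finset.Icc 1 n,
          ((A / wvF n a ε ξ A) *
          (btwF n a ε ξ k A * HF n a ε ξ A y pa py ^ (n - k) * py ^ (2 * k - 1) * py ^ 2 -
            2 * bdF n a ε ξ k A * HF n a ε ξ A y pa py ^ (n - k) *
              (HF n a ε ξ A y pa py - A * py ^ 2) * py ^ (2 * k - 1))) := by
      rw [Finset.mul_sum]
    have h2 : (∑ k ∈ Finset.range (n + 1),
        (y * (-(2 * A * ((-1 : ℝ) ^ k * sigma n a (k : ℤ)) *
          HF n a ε ξ A y pa py ^ (n - k) * py ^ (2 * k + 1)))))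
        = y * ∑ k ∈ Finset.range (n + 1),
          (-(2 * A * ((-1 : ℝ) ^ k * sigma n a (k : ℤ)) *
          HF n a ε ξ A y pa py ^ (n - k) * py ^ (2 * k + 1))) := by
      rw [Finset.mul_sum]
    rw [h1, h2]
    linear_combination y * hcore
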